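/- Let H be a complex m×n matrix, y ∈ ℂᵐ, ρ ≥ 0, and let β > 0 satisfy ‖Hu‖² ≤ β‖u‖² for all u ∈ ℂⁿ. Let X ⊆ ℂⁿ be a nonempty closed convex set (with ℂⁿ regarded as a real Hilbert space), let x, x⁻ ∈ X, let ι ≥ 0, and set x̃ = x + ι(x − x⁻). Define φ(u) = (1/2)‖y − Hu‖² − ρ‖u‖² and let ψ(u) = (1/2)‖y − Hu‖² − 2ρ·Re⟨x, u − x⟩ − ρ‖x‖² be the majorant of φ at x, with real gradient ∇ψ(u) = Hᴴ(Hu − y) − 2ρx. Let x⁺ be the orthogonal projection of x̃ − (1/β)∇ψ(x̃) onto X. Then φ(x⁺) − φ(x) ≤ −(β/2)(‖x⁺ − x‖² − ι²‖x − x⁻‖²). -/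

import Mathlib

open Matrix

/-- Real part of the complex inner product on `EuclideanSpace ℂ (Fin k)`. -/
noncomputable def rin {k : ℕ} (a b : EuclideanSpace ℂ (Fin k)) : ℝ :=
  RCLike.re (inner ℂ a b : ℂ)

lemma rin_sub_left {k : ℕ} (a b c : EuclideanSpace ℂ (Fin k)) :
    rin (a - b) c = rin a c - rin b c := by
  simp [rin, inner_sub_left]

lemma rin_sub_right {k : ℕ} (a b c : EuclideanSpace ℂ (Fin k)) :
    rin a (b - c) = rin a b - rin a c := by
  simp [rin, inner_sub_right]

lemma rin_neg_left {k : ℕ} (a b : EuclideanSpace ℂ (Fin k)) :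
    rin (-a) b = -rin a b := by
  simp [rin, inner_neg_left]

lemma rin_neg_right {k : ℕ} (a b : EuclideanSpace ℂ (Fin k)) :
    rin a (-b) = -rin a b := by
  simp [rin, inner_neg_right]

lemma rin_smul_left {k : ℕ} (r : ℝ) (a b : EuclideanSpace ℂ (Fin k)) :
    rin (r • a) b = r * rin a b := by
  rw [rin, RCLike.real_smul_eq_coe_smul (K := ℂ), inner_smul_left]
  simp [rin, RCLike.conj_ofReal]

lemma rin_smul_right {k : ℕ} (r : ℝ) (a b : EuclideanSpace ℂ (Fin k)) :
    rin a (r • b) = r * rin a b := by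
  rw [rin, RCLike.real_smul_eq_coe_smul (K := ℂ), inner_smul_right]
  simp [rin]

lemma rin_comm {k : ℕ} (a b : EuclideanSpace ℂ (Fin k)) :
    rin a b = rin b a := by
  rw [rin, rin, ← inner_conj_symm]
  simp only [RCLike.conj_re]

lemma rin_self {k : ℕ} (a : EuclideanSpace ℂ (Fin k)) : rin a a = ‖a‖ ^ 2 := by
  rw [rin]
  exact inner_self_eq_norm_sq a

lemma rin_norm_sub {k : ℕ} (a b : EuclideanSpace ℂ (Fin k)) :
    ‖a - b‖ ^ 2 = ‖a‖ ^ 2 - 2 * rin a b + ‖b‖ ^ 2 :=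
  norm_sub_sq (𝕜 := ℂ) a b

lemma rin_norm_add {k : ℕ} (a b : EuclideanSpace ℂ (Fin k)) :
    ‖a + b‖ ^ 2 = ‖a‖ ^ 2 + 2 * rin a b + ‖b‖ ^ 2 :=
  norm_add_sq (𝕜 := ℂ) a b

lemma rin_adjoint {m n : ℕ} (H : Matrix (Fin m) (Fin n) ℂ)
    (w : EuclideanSpace ℂ (Fin m)) (u : EuclideanSpace ℂ (Fin n)) :
    rin (Matrix.toEuclideanLin Hᴴ w) u = rin w (Matrix.toEuclideanLin H u) := by
  unfold rin
  congr 1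
  rw [Matrix.toEuclideanLin_conjTranspose_eq_adjoint]
  exact LinearMap.adjoint_inner_left _ _ _

set_option maxHeartbeats 1000000 in
/-- Per-iteration descent inequality for the one-step accelerated projected-gradient
symbol update. -/
theorem stmt4 {m n : ℕ} (H : Matrix (Fin m) (Fin n) ℂ) (y : EuclideanSpace ℂ (Fin m))
    (ρ : ℝ) (hρ : 0 ≤ ρ) (β : ℝ) (hβ : 0 < β)
    (hβop : ∀ u : EuclideanSpace ℂ (Fin n),
      ‖Matrix.toEuclideanLin H u‖ ^ 2 ≤ β * ‖u‖ ^ 2)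
    (X : Set (EuclideanSpace ℂ (Fin n))) (hXne : X.Nonempty) (hXcl : IsClosed X)
    (hXcv : Convex ℝ X)
    (x xm : EuclideanSpace ℂ (Fin n)) (hx : x ∈ X) (hxm : xm ∈ X)
    (ι : ℝ) (hι : 0 ≤ ι)
    (xt : EuclideanSpace ℂ (Fin n)) (hxt : xt = x + ι • (x - xm))
    (g : EuclideanSpace ℂ (Fin n) → EuclideanSpace ℂ (Fin n))
    (hg : ∀ u : EuclideanSpace ℂ (Fin n),
      g u = Matrix.toEuclideanLin Hᴴ (Matrix.toEuclideanLin H u - y) - (2 * ρ) • x)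
    (xp : EuclideanSpace ℂ (Fin n)) (hxpX : xp ∈ X)
    (hproj : ∀ w ∈ X, ‖xp - (xt - β⁻¹ • g xt)‖ ≤ ‖w - (xt - β⁻¹ • g xt)‖) :
    (1 / 2 * ‖y - Matrix.toEuclideanLin H xp‖ ^ 2 - ρ * ‖xp‖ ^ 2)
        - (1 / 2 * ‖y - Matrix.toEuclideanLin H x‖ ^ 2 - ρ * ‖x‖ ^ 2)
      ≤ -(β / 2) * (‖xp - x‖ ^ 2 - ι ^ 2 * ‖x - xm‖ ^ 2) := by
  set A := Matrix.toEuclideanLin H with hA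
  set z := xt - β⁻¹ • g xt with hz
  -- variational inequality for the projection, at the point x
  have hVI0 : 0 ≤ rin (xp - z) (x - xp) := by
    by_contra hneg
    push_neg at hneg
    set R := rin (xp - z) (x - xp) with hR
    set C := ‖x - xp‖ ^ 2 with hC
    have hC0 : 0 ≤ C := by positivity
    set t : ℝ := min 1 (-R / (C + 1)) with ht
    have ht0 : 0 < t := by
      apply lt_min one_pos
      apply div_pos (by linarith) (by linarith)
    have ht1 : t ≤ 1 := min_le_left _ _
    have htR : t ≤ -R / (C + 1) := min_le_right _ _
    -- the convex combination xp + t • (x - xp) lies in X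
    have hmem : xp + t • (x - xp) ∈ X := by
      have h := hXcv hxpX hx (by linarith : (0:ℝ) ≤ 1 - t) ht0.le (by ring)
      have heq : (1 - t) • xp + t • x = xp + t • (x - xp) := by
        rw [sub_smul, smul_sub, one_smul]
        abel
      rwa [heq] at h
    have hle := hproj _ hmem
    have hsq : ‖xp - z‖ ^ 2 ≤ ‖xp + t • (x - xp) - z‖ ^ 2 := by
      exact pow_le_pow_left₀ (norm_nonneg _) hle 2
    have hexp : ‖xp + t • (x - xp) - z‖ ^ 2
        = ‖xp - z‖ ^ 2 + 2 * (t * R) + t ^ 2 * C := by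
      have h1 : xp + t • (x - xp) - z = (xp - z) + t • (x - xp) := by abel
      rw [h1, rin_norm_add, rin_smul_right, norm_smul, Real.norm_eq_abs, mul_pow,
        sq_abs, hR, hC]
    rw [hexp] at hsq
    have hkey : 0 ≤ 2 * (t * R) + t ^ 2 * C := by linarith
    -- derive a contradiction
    have h2 : t * (C + 1) ≤ -R :=
      (le_div_iff₀ (by linarith : (0:ℝ) < C + 1)).mp htR
    have h3 : t ^ 2 * C ≤ t * (-R) := by
      have : t * C ≤ -R := by nlinarith
      calc t ^ 2 * C = t * (t * C) := by ring
        _ ≤ t * (-R) := by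
            apply mul_le_mul_of_nonneg_left _ ht0.le
            exact this
    nlinarith
  -- gradient inner products
  have hgi : ∀ (v w : EuclideanSpace ℂ (Fin n)),
      rin (g v) w = rin (A v - y) (A w) - 2 * ρ * rin x w := by
    intro v w
    rw [hg v, rin_sub_left, rin_smul_left, rin_adjoint]
  -- quadratic expansion of the data-fit term
  have hq : ∀ (u v : EuclideanSpace ℂ (Fin n)),
      ‖y - A u‖ ^ 2 = ‖y - A v‖ ^ 2 - 2 * rin (y - A v) (A (u - v))
        + ‖A (u - v)‖ ^ 2 := by
    intro u v
    have h : y - A u = (y - A v) - A (u - v) := by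
      rw [map_sub]; abel
    rw [h, rin_norm_sub]
  -- step-size form of the variational inequality
  have hVI' : rin (g xt) (xp - x) ≤ β * rin (xt - xp) (xp - x) := by
    have h1 : xp - z = (xp - xt) + β⁻¹ • g xt := by rw [hz]; abel
    have h2 : rin (xp - z) (x - xp)
        = rin (xp - xt) (x - xp) + β⁻¹ * rin (g xt) (x - xp) := by
      rw [h1]
      have : rin ((xp - xt) + β⁻¹ • g xt) (x - xp)
          = rin (xp - xt) (x - xp) + rin (β⁻¹ • g xt) (x - xp) := by
        simp [rin, inner_add_left]
        ring
      rw [this, rin_smul_left]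
    rw [h2] at hVI0
    have h3 : rin (g xt) (xp - x) = -rin (g xt) (x - xp) := by
      have : xp - x = -(x - xp) := by abel
      rw [this, rin_neg_right]
    have h4 : rin (xt - xp) (xp - x) = rin (xp - xt) (x - xp) := by
      have e1 : xt - xp = -(xp - xt) := by abel
      have e2 : xp - x = -(x - xp) := by abel
      rw [e1, e2, rin_neg_left, rin_neg_right, neg_neg]
    rw [h3, h4]
    have h5 := mul_le_mul_of_nonneg_left hVI0 hβ.le
    rw [mul_zero, mul_add, ← mul_assoc, mul_inv_cancel₀ hβ.ne', one_mul] at h5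
    linarith
  -- smoothness step
  have hsm : ‖y - A xp‖ ^ 2 ≤ ‖y - A xt‖ ^ 2
      - 2 * rin (y - A xt) (A (xp - xt)) + β * ‖xp - xt‖ ^ 2 := by
    have h1 := hq xp xt
    have h2 := hβop (xp - xt)
    linarith
  -- convexity step
  have hcv : ‖y - A xt‖ ^ 2 - 2 * rin (y - A xt) (A (x - xt)) ≤ ‖y - A x‖ ^ 2 := by
    have h1 := hq x xt
    nlinarith [sq_nonneg ‖A (x - xt)‖]
  -- linearity
  have hlin : rin (y - A xt) (A (xp - xt)) - rin (y - A xt) (A (x - xt))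
      = rin (y - A xt) (A (xp - x)) := by
    rw [← rin_sub_right, ← map_sub]
    congr 2
    abel
  have hgix : rin (g xt) (xp - x)
      = -rin (y - A xt) (A (xp - x)) - 2 * ρ * rin x (xp - x) := by
    rw [hgi]
    have h : A xt - y = -(y - A xt) := by abel
    rw [h, rin_neg_left]
  -- polarization identity
  have hpol : 2 * rin (xt - xp) (xp - x)
      = ‖xt - x‖ ^ 2 - ‖xt - xp‖ ^ 2 - ‖xp - x‖ ^ 2 := by
    have h : xt - x = (xt - xp) + (xp - x) := by abel
    rw [h, rin_norm_add]
    ring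
  -- ‖xt - x‖² = ι² ‖x - xm‖²
  have hnt : ‖xt - x‖ ^ 2 = ι ^ 2 * ‖x - xm‖ ^ 2 := by
    have h : xt - x = ι • (x - xm) := by rw [hxt]; abel
    rw [h, norm_smul, Real.norm_eq_abs, mul_pow, sq_abs]
  -- majorization
  have hmaj : ρ * ‖x‖ ^ 2 - ρ * ‖xp‖ ^ 2 + 2 * ρ * rin x (xp - x)
      = -(ρ * ‖xp - x‖ ^ 2) := by
    have h1 : ‖xp - x‖ ^ 2 = ‖xp‖ ^ 2 - 2 * rin xp x + ‖x‖ ^ 2 := rin_norm_sub xp x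
    have h2 : rin x (xp - x) = rin x xp - rin x x := rin_sub_right _ _ _
    have h3 : rin x x = ‖x‖ ^ 2 := rin_self x
    have h4 : rin x xp = rin xp x := rin_comm _ _
    rw [h2, h3, h4]
    nlinarith
  -- final combination
  have hsq0 : 0 ≤ ρ * ‖xp - x‖ ^ 2 := by positivity
  have hpolβ : β * (2 * rin (xt - xp) (xp - x))
      = β * (‖xt - x‖ ^ 2 - ‖xt - xp‖ ^ 2 - ‖xp - x‖ ^ 2) := by rw [hpol]
  have hntβ : β * ‖xt - x‖ ^ 2 = β * (ι ^ 2 * ‖x - xm‖ ^ 2) := by rw [hnt]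
  have hrevβ : β * ‖xp - xt‖ ^ 2 = β * ‖xt - xp‖ ^ 2 := by rw [norm_sub_rev]
  linarith [hsm, hcv, hVI', hgix, hlin, hpolβ, hntβ, hrevβ, hmaj, hsq0,
    mul_le_mul_of_nonneg_left hVI' hβ.le]
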